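/- arXiv:2102.02269 — 3 statements merged into one kernel-verified Lean document; each statement's English description precedes it below -/
import Mathlib

section
/- Let (a_n)_{n≥0} be a real sequence with Σ_{n=0}^{∞} |a_n| < ∞, and let f : [−1,1] → ℝ satisfy f(x) = a_0/2 + Σ_{n=1}^{∞} a_n T_n(x) for all x ∈ [−1,1]. For N ≥ 1, let C_N be the unique polynomial of degree at most N with C_N(x_k) = f(x_k) at the Gauss–Lobatto nodes x_k = −cos(kπ/N), k = 0,…,N. Then the interpolation error is at most twice the tail of the coefficient series: sup_{x∈[−1,1]} |f(x) − C_N(x)| ≤ 2 Σ_{n=N}^{∞} |a_n|. -/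
open Polynomial Chebyshev

namespace ChebAux

open Real

/-- Alias index: the `n`-th Chebyshev polynomial coincides with the `al N n`-th one
at the Gauss–Lobatto nodes. -/
def al (N n : ℕ) : ℕ := (((n : ℤ) + N) % (2 * N) - N).natAbs

lemma al_le {N : ℕ} (hN : 1 ≤ N) (n : ℕ) : al N n ≤ N := by
  have h2 : (0 : ℤ) < 2 * N := by
    have : (1 : ℤ) ≤ N := by exact_mod_cast hN
    omega
  have h1 : 0 ≤ ((n : ℤ) + N) % (2 * N) := Int.emod_nonneg _ (ne_of_gt h2)
  have h3 : ((n : ℤ) + N) % (2 * N) < 2 * N := Int.emod_lt_of_pos _ h2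
  unfold al
  omega

lemma al_eq {N n : ℕ} (hN : 1 ≤ N) (h : n ≤ N) : al N n = n := by
  unfold al
  rcases lt_or_eq_of_le h with h' | h'
  · have : ((n : ℤ) + N) % (2 * N) = (n : ℤ) + N :=
      Int.emod_eq_of_lt (by positivity) (by push_cast; omega)
    omega
  · subst h'
    have : ((n : ℤ) + n) % (2 * n) = 0 := by
      rw [show (n : ℤ) + n = 2 * n by ring, Int.emod_self]
    omega

lemma cos_al {N : ℕ} (hN : 1 ≤ N) (n j : ℕ) :
    Real.cos ((n : ℝ) * ((j : ℝ) * π / N)) =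
      Real.cos ((al N n : ℝ) * ((j : ℝ) * π / N)) := by
  have hNR : (N : ℝ) ≠ 0 := Nat.cast_ne_zero.mpr (by omega)
  set r : ℤ := ((n : ℤ) + N) % (2 * N) with hr
  set q : ℤ := ((n : ℤ) + N) / (2 * N) with hq
  have hqr : (n : ℤ) = (r - N) + 2 * N * q := by
    have h := Int.emod_add_mul_ediv ((n : ℤ) + N) (2 * N)
    rw [← hr, ← hq] at h
    omega
  have e1 : (n : ℝ) * ((j : ℝ) * π / N) =
      ((r - N : ℤ) : ℝ) * ((j : ℝ) * π / N) + ((q * j : ℤ) : ℝ) * (2 * π) := by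
    have hn : (n : ℝ) = ((r - N : ℤ) : ℝ) + 2 * N * (q : ℤ) := by exact_mod_cast hqr
    rw [hn]; push_cast; field_simp
  rw [e1, Real.cos_add_int_mul_two_pi]
  have hcast : ((al N n : ℕ) : ℤ) = ((r - (N : ℤ)).natAbs : ℤ) := by rw [hr]; rfl
  rcases Int.natAbs_eq (r - (N : ℤ)) with h | h
  · have h2 : ((r - (N : ℤ) : ℤ) : ℝ) = (al N n : ℝ) := by
      exact_mod_cast congrArg (Int.cast : ℤ → ℝ) (h.trans hcast.symm)
    rw [h2]
  · have h2 : ((r - (N : ℤ) : ℤ) : ℝ) = -(al N n : ℝ) := by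
      have : r - (N : ℤ) = -((al N n : ℕ) : ℤ) := by rw [h, hcast]
      exact_mod_cast congrArg (Int.cast : ℤ → ℝ) this
    rw [h2, neg_mul, Real.cos_neg]

lemma natDegree_T_le : ∀ n : ℕ, (T ℝ (n : ℤ)).natDegree ≤ n := by
  have key : ∀ n : ℕ, (T ℝ (n : ℤ)).natDegree ≤ n ∧ (T ℝ ((n : ℤ) + 1)).natDegree ≤ n + 1 := by
    intro n
    induction n with
    | zero => simp [T_zero, T_one]
    | succ k ih =>
      refine ⟨by exact_mod_cast ih.2, ?_⟩
      have h2 : T ℝ ((k : ℤ) + 2) = 2 * X * T ℝ ((k : ℤ) + 1) - T ℝ (k : ℤ) := T_add_two ℝ (k : ℤ)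
      have : ((k + 1 : ℕ) : ℤ) + 1 = (k : ℤ) + 2 := by push_cast; ring
      rw [this, h2]
      refine (natDegree_sub_le _ _).trans (max_le ?_ (ih.1.trans (by omega)))
      calc (2 * X * T ℝ ((k : ℤ) + 1)).natDegree
          ≤ (2 * X : ℝ[X]).natDegree + (T ℝ ((k : ℤ) + 1)).natDegree := natDegree_mul_le
        _ ≤ 1 + (k + 1) := by
            gcongr
            · exact (natDegree_mul_le).trans (by simp)
            · exact ih.2
        _ ≤ k + 1 + 1 := by omega
  exact fun n => (key n).1

lemma abs_T_le {x : ℝ} (hx : x ∈ Set.Icc (-1 : ℝ) 1) (n : ℤ) : |(T ℝ n).eval x| ≤ 1 := by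
  obtain ⟨hx1, hx2⟩ := hx
  have : Real.cos (Real.arccos x) = x := Real.cos_arccos hx1 hx2
  rw [← this, T_real_cos]
  exact Real.abs_cos_le_one _

end ChebAux

open ChebAux

set_option maxHeartbeats 2000000

/-- Interpolation error of Chebyshev interpolation at the Gauss–Lobatto nodes:
if `f(x) = a₀/2 + Σ_{n=1}^∞ aₙ Tₙ(x)` with `Σ |aₙ| < ∞`, and `C` is the (unique) polynomial
of degree at most `N` with `C(xₖ) = f(xₖ)` at the Gauss–Lobatto nodes `xₖ = -cos(kπ/N)`,
`k = 0, …, N`, then `|f(x) - C(x)| ≤ 2 Σ_{n=N}^∞ |aₙ|` for all `x ∈ [-1,1]`. -/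
theorem chebyshev_interpolation_error
    (a : ℕ → ℝ) (ha : Summable fun n : ℕ => |a n|)
    (f : ℝ → ℝ)
    (hf : ∀ x ∈ Set.Icc (-1 : ℝ) 1,
      HasSum (fun n : ℕ => a (n + 1) * (Chebyshev.T ℝ (n + 1)).eval x) (f x - a 0 / 2))
    (N : ℕ) (hN : 1 ≤ N)
    (C : Polynomial ℝ) (hdeg : C.natDegree ≤ N)
    (hC : ∀ k : ℕ, k ≤ N →
      C.eval (-Real.cos (k * Real.pi / N)) = f (-Real.cos (k * Real.pi / N))) :
    ∀ x ∈ Set.Icc (-1 : ℝ) 1, |f x - C.eval x| ≤ 2 * ∑' n : ℕ, |a (N + n)| := by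
  classical
  have hNR : (N : ℝ) ≠ 0 := Nat.cast_ne_zero.mpr (by omega)
  have haS : Summable fun n : ℕ => |a (n + 1)| := (summable_nat_add_iff 1).mpr ha
  have hnodemem : ∀ j : ℕ, Real.cos ((j : ℝ) * Real.pi / N) ∈ Set.Icc (-1 : ℝ) 1 :=
    fun j => ⟨Real.neg_one_le_cos _, Real.cos_le_one _⟩
  set G : ℕ → ℕ := fun n => al N (n + 1) with hG
  set c : ℕ → ℝ := fun m => ∑' p : G ⁻¹' {m}, a ((p : ℕ) + 1) with hc
  set Q : Polynomial ℝ :=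
    Polynomial.C (a 0 / 2) + ∑ m ∈ Finset.range (N + 1), Polynomial.C (c m) * T ℝ (m : ℤ)
    with hQ
  have hQeval : ∀ y ∈ Set.Icc (-1 : ℝ) 1,
      HasSum (fun n : ℕ => a (n + 1) * (T ℝ (G n : ℤ)).eval y) (Q.eval y - a 0 / 2) := by
    intro y hy
    have hsum : Summable (fun n : ℕ => a (n + 1) * (T ℝ (G n : ℤ)).eval y) := by
      apply Summable.of_norm_bounded haS
      intro n
      rw [Real.norm_eq_abs, abs_mul]
      calc |a (n + 1)| * |(T ℝ (G n : ℤ)).eval y| ≤ |a (n + 1)| * 1 :=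
            mul_le_mul_of_nonneg_left (abs_T_le hy _) (abs_nonneg _)
        _ = |a (n + 1)| := mul_one _
    have h2 := hsum.hasSum.tsum_fiberwise G
    have h3 : ∀ m : ℕ, (∑' p : G ⁻¹' {m}, a ((p : ℕ) + 1) * (T ℝ (G (p : ℕ) : ℤ)).eval y)
        = c m * (T ℝ (m : ℤ)).eval y := by
      intro m
      rw [hc, ← tsum_mul_right]
      exact tsum_congr fun p => by rw [show G (p : ℕ) = m from p.2]
    have h4 : ∀ m ∉ Finset.range (N + 1),
        (∑' p : G ⁻¹' {m}, a ((p : ℕ) + 1) * (T ℝ (G (p : ℕ) : ℤ)).eval y) = 0 := by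
      intro m hm
      have : IsEmpty (G ⁻¹' {m}) := by
        rw [Set.isEmpty_coe_sort, Set.eq_empty_iff_forall_notMem]
        intro n hn
        have hle := al_le hN (n + 1)
        simp only [Set.mem_preimage, Set.mem_singleton_iff, hG] at hn
        simp only [Finset.mem_range] at hm
        omega
      exact tsum_empty
    have h6 := h2.unique (hasSum_sum_of_ne_finset_zero h4)
    have h7 : Q.eval y - a 0 / 2 = ∑' n : ℕ, a (n + 1) * (T ℝ (G n : ℤ)).eval y := by
      rw [hQ]
      simp only [Polynomial.eval_add, Polynomial.eval_C, Polynomial.eval_finset_sum,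
        Polynomial.eval_mul]
      rw [h6, Finset.sum_congr rfl fun m _ => h3 m]
      ring
    rw [h7]
    exact hsum.hasSum
  have hnode : ∀ j : ℕ, j ≤ N → Q.eval (Real.cos ((j : ℝ) * Real.pi / N))
      = C.eval (Real.cos ((j : ℝ) * Real.pi / N)) := by
    intro j hj
    set y := Real.cos ((j : ℝ) * Real.pi / N) with hy
    have h1 := hQeval y (hnodemem j)
    have h2 := hf y (hnodemem j)
    have h3 : (fun n : ℕ => a (n + 1) * (T ℝ (G n : ℤ)).eval y)
        = fun n : ℕ => a (n + 1) * (T ℝ ((n : ℤ) + 1)).eval y := by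
      funext n
      congr 1
      rw [hy, T_real_cos, T_real_cos]
      have h := cos_al hN (n + 1) j
      push_cast at h ⊢
      rw [← h]
    rw [h3] at h1
    have h4 := h1.unique h2
    have h5 : Q.eval y = f y := by linarith
    rw [h5]
    have hnode2 : -Real.cos (((N - j : ℕ) : ℝ) * Real.pi / N) = y := by
      rw [hy]
      have e1 : ((N - j : ℕ) : ℝ) = (N : ℝ) - j := by
        have : (j : ℝ) ≤ N := by exact_mod_cast hj
        push_cast [hj]
        ring
      rw [e1, show ((N : ℝ) - j) * Real.pi / N = Real.pi - (j : ℝ) * Real.pi / N by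
        field_simp, Real.cos_pi_sub, neg_neg]
    have h6 := hC (N - j) (Nat.sub_le _ _)
    rw [hnode2] at h6
    exact h6.symm
  have hQdeg : Q.natDegree ≤ N := by
    rw [hQ]
    refine (natDegree_add_le _ _).trans (max_le (by simp) ?_)
    apply Polynomial.natDegree_sum_le_of_forall_le
    intro m hm
    refine natDegree_mul_le.trans ?_
    simp only [natDegree_C, zero_add]
    exact (natDegree_T_le m).trans (by simp only [Finset.mem_range] at hm; omega)
  have hQC : Q = C := by
    have hsub : Q - C = 0 := by
      apply Polynomial.eq_zero_of_natDegree_lt_card_of_eval_eq_zero (Q - C)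
        (f := fun j : Fin (N + 1) => Real.cos ((j : ℝ) * Real.pi / N))
      · intro j1 j2 hj
        have hmem : ∀ j : Fin (N + 1), ((j : ℝ) * Real.pi / N) ∈ Set.Icc 0 Real.pi := by
          intro j
          constructor
          · positivity
          · rw [div_le_iff₀ (by positivity : (0:ℝ) < N)]
            have hjN : (j : ℝ) ≤ N := by exact_mod_cast Nat.lt_succ_iff.mp j.2
            nlinarith [Real.pi_pos]
        have h := Real.injOn_cos (hmem j1) (hmem j2) hj
        have hπ : (0 : ℝ) < Real.pi := Real.pi_pos
        have h2 : (j1 : ℝ) = (j2 : ℝ) := by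
          exact mul_right_cancel₀ hπ.ne' ((div_left_inj' hNR).mp h)
        have : (j1 : ℕ) = (j2 : ℕ) := by exact_mod_cast h2
        exact Fin.ext this
      · intro i
        rw [Polynomial.eval_sub, hnode i (Nat.lt_succ_iff.mp i.2), sub_self]
      · rw [Fintype.card_fin]
        exact Nat.lt_succ_of_le ((natDegree_sub_le _ _).trans (max_le hQdeg hdeg))
    exact sub_eq_zero.mp hsub
  intro x hx
  have h1 := hf x hx
  have h2 := hQeval x hx
  rw [hQC] at h2
  have h3 := h1.sub h2
  set g : ℕ → ℝ := fun n =>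
      a (n + 1) * (T ℝ ((n : ℤ) + 1)).eval x - a (n + 1) * (T ℝ (G n : ℤ)).eval x with hg
  have habs : ∀ n, |g n| ≤ 2 * |a (n + 1)| := by
    intro n
    rw [hg]
    calc |a (n + 1) * (T ℝ ((n : ℤ) + 1)).eval x - a (n + 1) * (T ℝ (G n : ℤ)).eval x|
        ≤ |a (n + 1) * (T ℝ ((n : ℤ) + 1)).eval x| + |a (n + 1) * (T ℝ (G n : ℤ)).eval x| :=
          abs_sub _ _
      _ ≤ |a (n + 1)| * 1 + |a (n + 1)| * 1 := by
          rw [abs_mul, abs_mul]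
          gcongr
          · exact abs_T_le hx _
          · exact abs_T_le hx _
      _ = 2 * |a (n + 1)| := by ring
  have hgs : Summable fun n => |g n| :=
    Summable.of_nonneg_of_le (fun n => abs_nonneg _) habs (haS.mul_left 2)
  have heq : f x - C.eval x = ∑' n, g n := by
    have h4 := h3.tsum_eq
    have : f x - a 0 / 2 - (C.eval x - a 0 / 2) = f x - C.eval x := by ring
    rw [this] at h4
    exact h4.symm
  rw [heq]
  have hb1 : |∑' n, g n| ≤ ∑' n, |g n| := by
    have hgs' : Summable fun n => ‖g n‖ := by simpa only [Real.norm_eq_abs] using hgs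
    have h := norm_tsum_le_tsum_norm hgs'
    simpa only [Real.norm_eq_abs] using h
  have hzero : ∀ i < N, |g i| = 0 := by
    intro i hi
    have hGi : G i = i + 1 := al_eq hN (by omega)
    have h5 : ((G i : ℕ) : ℤ) = (i : ℤ) + 1 := by rw [hGi]; push_cast; ring
    simp only [hg]
    rw [h5, sub_self, abs_zero]
  have e : ∑' n, |g n| = ∑' n, |g (n + N)| := by
    rw [← hgs.sum_add_tsum_nat_add N,
      Finset.sum_eq_zero fun i hi => hzero i (Finset.mem_range.mp hi), zero_add]
  have hT : Summable fun n => |a (N + n)| := by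
    have := (summable_nat_add_iff N).mpr ha
    exact this.congr fun n => by rw [add_comm]
  have hT1 : Summable fun n => |a (n + N + 1)| := by
    have := (summable_nat_add_iff (N + 1)).mpr ha
    exact this.congr fun n => by ring_nf
  have hsl : Summable fun n : ℕ => |g (n + N)| := (summable_nat_add_iff N).mpr hgs
  have htail : ∑' n, |g (n + N)| ≤ ∑' n, 2 * |a (n + N + 1)| := by
    apply Summable.tsum_le_tsum _ hsl (hT1.mul_left 2)
    intro n
    exact habs (n + N)
  have htail2 : ∑' n, |a (n + N + 1)| ≤ ∑' n, |a (N + n)| := by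
    rw [hT.tsum_eq_zero_add]
    have hcong : ∀ n, |a (N + (n + 1))| = |a (n + N + 1)| := fun n => by
      rw [show N + (n + 1) = n + N + 1 from by omega]
    rw [tsum_congr hcong]
    have := abs_nonneg (a (N + 0))
    linarith
  calc |∑' n, g n| ≤ ∑' n, |g n| := hb1
    _ = ∑' n, |g (n + N)| := e
    _ ≤ ∑' n, 2 * |a (n + N + 1)| := htail
    _ = 2 * ∑' n, |a (n + N + 1)| := tsum_mul_left
    _ ≤ 2 * ∑' n, |a (N + n)| := by linarith
end

section
/- Fix n ≥ 1. Let (a_m)_{m≥0} be a real sequence with Σ_{m=0}^{∞} |a_m| < ∞ and let f : [−1,1] → ℝ satisfy f(x) = a_0/2 + Σ_{m=1}^{∞} a_m T_m(x) for all x ∈ [−1,1]. Define the aliased coefficients b_k = a_k + Σ_{j=1}^{∞} (a_{k+2jn} + a_{2jn−k}) for 0 ≤ k ≤ n. Then at every Gauss–Lobatto node x_i = −cos(iπ/n), i ∈ {0,…,n}, one has f(x_i) = b_0/2 + Σ_{k=1}^{n−1} b_k T_k(x_i) + (b_n/2) T_n(x_i); that is, the coefficients of the Chebyshev interpolation polynomial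 differ from the exact Chebyshev coefficients exactly by the aliasing error. -/
open Polynomial Chebyshev

set_option maxHeartbeats 1600000 in
/-- The coefficients of the Chebyshev interpolation polynomial differ from the exact
Chebyshev coefficients exactly by the aliasing error: if `f(x) = a₀/2 + Σ_{m=1}^∞ aₘ Tₘ(x)`
with `Σ |aₘ| < ∞`, and `b_k = a_k + Σ_{j=1}^∞ (a_{k+2jn} + a_{2jn-k})` for `0 ≤ k ≤ n`, then
at every Gauss–Lobatto node `xᵢ = -cos(iπ/n)` one has
`f(xᵢ) = b₀/2 + Σ_{k=1}^{n-1} b_k T_k(xᵢ) + (b_n/2) T_n(xᵢ)`. -/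
theorem chebyshev_interpolation_aliased_coefficients
    (n : ℕ) (hn : 1 ≤ n)
    (a : ℕ → ℝ) (ha : Summable fun m : ℕ => |a m|)
    (f : ℝ → ℝ)
    (hf : ∀ x ∈ Set.Icc (-1 : ℝ) 1,
      HasSum (fun m : ℕ => a (m + 1) * (Chebyshev.T ℝ (m + 1)).eval x) (f x - a 0 / 2))
    (b : ℕ → ℝ)
    (hb : ∀ k : ℕ, k ≤ n →
      b k = a k + ∑' j : ℕ, (a (k + 2 * (j + 1) * n) + a (2 * (j + 1) * n - k)))
    (i : ℕ) (hi : i ≤ n) :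
    f (-Real.cos (i * Real.pi / n))
      = b 0 / 2
        + (∑ k ∈ Finset.Icc 1 (n - 1),
            b k * (Chebyshev.T ℝ k).eval (-Real.cos (i * Real.pi / n)))
        + b n / 2 * (Chebyshev.T ℝ n).eval (-Real.cos (i * Real.pi / n)) := by
  have hn0 : (n : ℝ) ≠ 0 := Nat.cast_ne_zero.2 (by omega)
  set θ₀ : ℝ := Real.pi - i * Real.pi / n with hθ₀def
  have hx : -Real.cos (i * Real.pi / n) = Real.cos θ₀ := by
    rw [hθ₀def, Real.cos_pi_sub]
  have hnθ₀ : (n : ℝ) * θ₀ = ((n : ℝ) - i) * Real.pi := by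
    rw [hθ₀def]; field_simp <;> ring
  rw [hx]
  clear_value θ₀
  clear hθ₀def
  -- aliasing identity for cosines
  have hcos : ∀ (m k : ℕ) (c : ℤ),
      ((m : ℝ) = 2 * n * c + k ∨ (m : ℝ) = 2 * n * c - k) →
      Real.cos (m * θ₀) = Real.cos (k * θ₀) := by
    rintro m k c (h | h)
    · have : (m : ℝ) * θ₀ = (k : ℝ) * θ₀ + ((c * ((n : ℤ) - (i : ℤ)) : ℤ) : ℝ) * (2 * Real.pi) := by
        push_cast
        have h2 : (m : ℝ) * θ₀ = 2 * n * c * θ₀ + k * θ₀ := by rw [h]; ring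
        rw [h2]; linear_combination (2 * (c : ℝ)) * hnθ₀
      rw [this, Real.cos_add_int_mul_two_pi]
    · have : (m : ℝ) * θ₀ = -((k : ℝ) * θ₀) + ((c * ((n : ℤ) - (i : ℤ)) : ℤ) : ℝ) * (2 * Real.pi) := by
        push_cast
        have h2 : (m : ℝ) * θ₀ = 2 * n * c * θ₀ - k * θ₀ := by rw [h]; ring
        rw [h2]; linear_combination (2 * (c : ℝ)) * hnθ₀
      rw [this, Real.cos_add_int_mul_two_pi, Real.cos_neg]
  -- the summand
  obtain ⟨g, hgdef⟩ : ∃ g : ℕ → ℝ, g = fun m => if m = 0 then 0 else a m * Real.cos (m * θ₀) :=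
    ⟨_, rfl⟩
  have hgabs : ∀ m, |g m| ≤ |a m| := by
    intro m
    by_cases h : m = 0
    · simp [hgdef, h]
    · simp only [hgdef, if_neg h, abs_mul]
      calc |a m| * |Real.cos (m * θ₀)| ≤ |a m| * 1 :=
        mul_le_mul_of_nonneg_left (Real.abs_cos_le_one _) (abs_nonneg _)
      _ = |a m| := mul_one _
  have hg : Summable g :=
    Summable.of_abs (ha.of_nonneg_of_le (fun m => abs_nonneg _) hgabs)
  have hA : Summable a := ha.of_abs
  -- summability of composites
  have hcompS : ∀ u : ℕ → ℕ, StrictMono u → Summable fun j => a (u j) :=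
    fun u hu => hA.comp_injective hu.injective
  -- f at the node as a tsum
  have hmem : Real.cos θ₀ ∈ Set.Icc (-1 : ℝ) 1 :=
    ⟨Real.neg_one_le_cos θ₀, Real.cos_le_one θ₀⟩
  have hfs := hf (Real.cos θ₀) hmem
  have hfx : f (Real.cos θ₀) - a 0 / 2 = ∑' m : ℕ, g (m + 1) := by
    rw [← hfs.tsum_eq]
    refine tsum_congr fun m => ?_
    rw [T_real_cos, hgdef]
    simp only [Nat.add_eq_zero, and_false, if_false, Nat.succ_ne_zero]
    push_cast
    ring_nf
  have hg0 : (∑' m : ℕ, g m) = ∑' m : ℕ, g (m + 1) := by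
    rw [Summable.tsum_eq_zero_add hg]; simp [hgdef]
  -- split into residue classes mod 2n
  haveI : NeZero (2 * n) := ⟨by omega⟩
  obtain ⟨S, hSdef⟩ : ∃ S : ℕ → ℝ, S = fun r => ∑' j : ℕ, g (j * (2 * n) + r) := ⟨_, rfl⟩
  have hSsummable : ∀ r : ℕ, Summable fun j : ℕ => g (j * (2 * n) + r) := by
    intro r
    exact hg.comp_injective (fun j1 j2 h => by simpa using Nat.eq_of_mul_eq_mul_right (by omega) (by omega : j1 * (2*n) = j2 * (2*n)))
  have hsplit : (∑' m : ℕ, g m) = ∑ r ∈ Finset.range (2 * n), S r := by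
    have h2 : HasSum (fun p : ℕ × Fin (2 * n) => g (p.1 * (2 * n) + (p.2 : ℕ))) (∑' m : ℕ, g m) :=
      (Nat.divModEquiv (2 * n)).symm.hasSum_iff.mpr hg.hasSum
    have h3 : HasSum (fun p : Fin (2 * n) × ℕ => g (p.2 * (2 * n) + (p.1 : ℕ))) (∑' m : ℕ, g m) :=
      ((Equiv.prodComm (Fin (2 * n)) ℕ).hasSum_iff).mpr h2
    have h4 : HasSum (fun r : Fin (2 * n) => S (r : ℕ)) (∑' m : ℕ, g m) := by
      rw [hSdef]
      exact h3.prod_fiberwise fun r => (hSsummable (r : ℕ)).hasSum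
    rw [h4.tsum_eq.symm, tsum_fintype, ← Fin.sum_univ_eq_sum_range (fun r => S r) (2 * n)]
  -- evaluation of Chebyshev polynomials at the node
  have heval : ∀ k : ℕ, (Chebyshev.T ℝ (k : ℤ)).eval (Real.cos θ₀) = Real.cos ((k : ℝ) * θ₀) := by
    intro k; rw [T_real_cos]; norm_cast
  -- S 0
  have hS0 : S 0 = ∑' j : ℕ, a (2 * (j + 1) * n) := by
    rw [hSdef]
    beta_reduce
    rw [Summable.tsum_eq_zero_add (hSsummable 0)]
    have hz : g (0 * (2 * n) + 0) = 0 := by rw [hgdef]; simp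
    rw [hz, zero_add]
    refine tsum_congr fun j => ?_
    have hidx : (j + 1) * (2 * n) + 0 = 2 * (j + 1) * n := by ring
    rw [hidx, hgdef]
    have hne : 2 * (j + 1) * n ≠ 0 := by positivity
    simp only [if_neg hne]
    have := hcos (2 * (j + 1) * n) 0 (j + 1) (Or.inl (by push_cast; ring))
    rw [this]
    simp
  have hb0 : b 0 = a 0 + 2 * S 0 := by
    rw [hb 0 (by omega), hS0]
    congr 1
    have : (fun j : ℕ => a (0 + 2 * (j + 1) * n) + a (2 * (j + 1) * n - 0))
        = fun j : ℕ => 2 * a (2 * (j + 1) * n) := by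
      funext j; simp [Nat.sub_zero]; ring
    rw [this, tsum_mul_left]
  -- S n
  have hSn : S n = b n / 2 * Real.cos ((n : ℝ) * θ₀) := by
    have hT' : Summable fun j : ℕ => a ((2 * j + 1) * n) := by
      refine hcompS _ (strictMono_nat_of_lt_succ fun j => ?_)
      have h1 : (2 * (j + 1) + 1) * n = (2 * j + 1) * n + 2 * n := by ring
      omega
    have hSn1 : S n = (∑' j : ℕ, a ((2 * j + 1) * n)) * Real.cos ((n : ℝ) * θ₀) := by
      rw [hSdef]
      beta_reduce
      rw [← tsum_mul_right]
      refine tsum_congr fun j => ?_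
      have hidx : j * (2 * n) + n = (2 * j + 1) * n := by ring
      rw [hidx, hgdef]
      have hne : (2 * j + 1) * n ≠ 0 := by positivity
      simp only [if_neg hne]
      rw [hcos ((2 * j + 1) * n) n j (Or.inl (by push_cast; ring))]
    have hbn : b n = 2 * ∑' j : ℕ, a ((2 * j + 1) * n) := by
      rw [hb n le_rfl]
      have hC : Summable fun j : ℕ => a (n + 2 * (j + 1) * n) := by
        refine hcompS _ (strictMono_nat_of_lt_succ fun j => ?_)
        have h1 : 2 * (j + 1 + 1) * n = 2 * (j + 1) * n + 2 * n := by ring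
        omega
      have hD : Summable fun j : ℕ => a (2 * (j + 1) * n - n) := by
        refine hcompS _ (strictMono_nat_of_lt_succ fun j => ?_)
        have h1 : 2 * (j + 1 + 1) * n = 2 * (j + 1) * n + 2 * n := by ring
        have h2 : n ≤ 2 * (j + 1) * n := by nlinarith
        omega
      rw [Summable.tsum_add hC hD]
      have hCeq : (∑' j : ℕ, a (n + 2 * (j + 1) * n))
          = (∑' j : ℕ, a ((2 * j + 1) * n)) - a n := by
        have hshift := Summable.tsum_eq_zero_add hT'
        have h1 : (fun j : ℕ => a ((2 * (j + 1) + 1) * n)) = fun j : ℕ => a (n + 2 * (j + 1) * n) := by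
          funext j; congr 1; ring
        rw [h1] at hshift
        have h2 : a ((2 * 0 + 1) * n) = a n := by norm_num
        rw [h2] at hshift
        linarith
      have hDeq : (∑' j : ℕ, a (2 * (j + 1) * n - n)) = ∑' j : ℕ, a ((2 * j + 1) * n) := by
        refine tsum_congr fun j => ?_
        congr 1
        have h1 : 2 * (j + 1) * n = (2 * j + 1) * n + n := by ring
        omega
      rw [hCeq, hDeq]; ring
    rw [hSn1, hbn]; ring
  -- S k + S (2n - k) for middle residues
  have hSk : ∀ k : ℕ, 1 ≤ k → k ≤ n - 1 →
      S k + S (2 * n - k) = b k * Real.cos ((k : ℝ) * θ₀) := by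
    intro k hk1 hk2
    have hkn : k < n := by omega
    have hSk1 : S k = (a k + ∑' j : ℕ, a (k + 2 * (j + 1) * n)) * Real.cos ((k : ℝ) * θ₀) := by
      rw [hSdef]
      beta_reduce
      rw [Summable.tsum_eq_zero_add (hSsummable k)]
      have hz : g (0 * (2 * n) + k) = a k * Real.cos ((k : ℝ) * θ₀) := by
        rw [hgdef]; simp only [zero_mul, zero_add, if_neg (by omega : k ≠ 0)]
      rw [hz]
      have h1 : (∑' j : ℕ, g ((j + 1) * (2 * n) + k))
          = (∑' j : ℕ, a (k + 2 * (j + 1) * n)) * Real.cos ((k : ℝ) * θ₀) := by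
        rw [← tsum_mul_right]
        refine tsum_congr fun j => ?_
        have hidx : (j + 1) * (2 * n) + k = k + 2 * (j + 1) * n := by ring
        rw [hidx, hgdef]
        have hne : k + 2 * (j + 1) * n ≠ 0 := by positivity
        simp only [if_neg hne]
        rw [hcos (k + 2 * (j + 1) * n) k (j + 1) (Or.inl (by push_cast; ring))]
      rw [h1]; ring
    have hSk2 : S (2 * n - k) = (∑' j : ℕ, a (2 * (j + 1) * n - k)) * Real.cos ((k : ℝ) * θ₀) := by
      rw [hSdef]
      beta_reduce
      rw [← tsum_mul_right]
      refine tsum_congr fun j => ?_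
      have hidx : j * (2 * n) + (2 * n - k) = 2 * (j + 1) * n - k := by
        have h1 : 2 * (j + 1) * n = j * (2 * n) + 2 * n := by ring
        omega
      rw [hidx, hgdef]
      have hle : k ≤ 2 * (j + 1) * n := by nlinarith
      have hne : 2 * (j + 1) * n - k ≠ 0 := by
        have h1 : 2 * (j + 1) * n = j * (2 * n) + 2 * n := by ring
        omega
      simp only [if_neg hne]
      rw [hcos (2 * (j + 1) * n - k) k (j + 1)
        (Or.inr (by push_cast [Nat.cast_sub hle]; ring))]
    have hC : Summable fun j : ℕ => a (k + 2 * (j + 1) * n) := by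
      refine hcompS _ (strictMono_nat_of_lt_succ fun j => ?_)
      have h1 : 2 * (j + 1 + 1) * n = 2 * (j + 1) * n + 2 * n := by ring
      omega
    have hD : Summable fun j : ℕ => a (2 * (j + 1) * n - k) := by
      refine hcompS _ (strictMono_nat_of_lt_succ fun j => ?_)
      have h1 : 2 * (j + 1 + 1) * n = 2 * (j + 1) * n + 2 * n := by ring
      have h2 : k ≤ 2 * (j + 1) * n := by nlinarith
      omega
    rw [hSk1, hSk2, hb k (by omega), Summable.tsum_add hC hD]
    ring
  -- decompose the finite sum over residues
  have hIco1 : Finset.Ico 1 n = Finset.Icc 1 (n - 1) := by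
    ext x; simp only [Finset.mem_Ico, Finset.mem_Icc]; omega
  have hIco2 : ∑ r ∈ Finset.Ico (n + 1) (2 * n), S r
      = ∑ k ∈ Finset.Icc 1 (n - 1), S (2 * n - k) := by
    refine Finset.sum_nbij' (fun r => 2 * n - r) (fun k => 2 * n - k) ?_ ?_ ?_ ?_ ?_
    · intro r hr; simp only [Finset.mem_Ico] at hr; simp only [Finset.mem_Icc]; omega
    · intro k hk; simp only [Finset.mem_Icc] at hk; simp only [Finset.mem_Ico]; omega
    · intro r hr; simp only [Finset.mem_Ico] at hr; beta_reduce; omega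
    · intro k hk; simp only [Finset.mem_Icc] at hk; beta_reduce; omega
    · intro r hr; simp only [Finset.mem_Ico] at hr; beta_reduce; congr 1; omega
  have hdecomp : ∑ r ∈ Finset.range (2 * n), S r
      = S 0 + (∑ k ∈ Finset.Icc 1 (n - 1), S k) + S n
        + ∑ k ∈ Finset.Icc 1 (n - 1), S (2 * n - k) := by
    rw [Finset.range_eq_Ico]
    rw [← Finset.sum_Ico_consecutive S (by omega : 0 ≤ 1) (by omega : 1 ≤ 2 * n)]
    rw [← Finset.sum_Ico_consecutive S (by omega : 1 ≤ n) (by omega : n ≤ 2 * n)]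
    rw [← Finset.sum_Ico_consecutive S (by omega : n ≤ n + 1) (by omega : n + 1 ≤ 2 * n)]
    rw [hIco1, hIco2]
    have h1 : ∑ r ∈ Finset.Ico 0 1, S r = S 0 := by simp
    have h2 : ∑ r ∈ Finset.Ico n (n + 1), S r = S n := by simp
    rw [h1, h2]; ring
  -- assemble
  have hfx2 : f (Real.cos θ₀) = a 0 / 2 + ∑ r ∈ Finset.range (2 * n), S r := by
    rw [← hsplit, hg0]; linarith [hfx]
  rw [hfx2, hdecomp]
  have hsum_mid : ∑ k ∈ Finset.Icc 1 (n - 1), S k + ∑ k ∈ Finset.Icc 1 (n - 1), S (2 * n - k)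
      = ∑ k ∈ Finset.Icc 1 (n - 1), b k * (Chebyshev.T ℝ (k : ℤ)).eval (Real.cos θ₀) := by
    rw [← Finset.sum_add_distrib]
    refine Finset.sum_congr rfl fun k hk => ?_
    simp only [Finset.mem_Icc] at hk
    rw [heval k, hSk k hk.1 hk.2]
  rw [heval n] at *
  linarith [hsum_mid]
end

section
/- Let (a_n)_{n≥0} be a real sequence with Σ_{n=1}^{∞} n² |a_n| < ∞, and let f : [−1,1] → ℝ satisfy f(x) = a_0/2 + Σ_{n=1}^{∞} a_n T_n(x) for all x ∈ [−1,1]. For N ≥ 1, let C_N be the unique polynomial of degree at most N with C_N(x_k) = f(x_k) at the Gauss–Lobatto nodes x_k = −cos(kπ/N), k = 0,…,N. Then the derivative of the interpolant approximates the derivative of f with at most twice the truncation penalty: sup_{x∈[−1,1]} |f'(x) − C_N'(x)| ≤ 2 Σ_{n=N}^{∞} n² |a_n|, where f' denotes the derivative of f within [−1,1]. -/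
set_option maxHeartbeats 1000000


open Polynomial Chebyshev
open Real Set Filter Asymptotics

section helpers

lemma my_abs_sin_nat_mul (n : ℕ) (th : ℝ) : |Real.sin ((n : ℝ) * th)| ≤ n * |Real.sin th| := by
  induction n with
  | zero => simp
  | succ n ih =>
    have : ((n + 1 : ℕ) : ℝ) * th = (n : ℝ) * th + th := by push_cast; ring
    rw [this, Real.sin_add]
    have hc1 : |Real.sin ((n:ℝ)*th) * Real.cos th| ≤ |Real.sin ((n:ℝ)*th)| := by
      rw [abs_mul]; exact mul_le_of_le_one_right (abs_nonneg _) (Real.abs_cos_le_one th)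
    have hc2 : |Real.cos ((n:ℝ)*th) * Real.sin th| ≤ |Real.sin th| := by
      rw [abs_mul]; exact mul_le_of_le_one_left (abs_nonneg _) (Real.abs_cos_le_one _)
    have habs := abs_add_le (Real.sin ((n:ℝ)*th) * Real.cos th) (Real.cos ((n:ℝ)*th) * Real.sin th)
    push_cast
    linarith

lemma my_abs_T_le (n : ℤ) {x : ℝ} (hx : x ∈ Icc (-1:ℝ) 1) : |(T ℝ n).eval x| ≤ 1 := by
  have h1 := Real.cos_arccos hx.1 hx.2
  rw [← h1, T_real_cos]
  exact Real.abs_cos_le_one _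

lemma my_abs_U_le (n : ℕ) : ∀ x ∈ Icc (-1:ℝ) 1, |(U ℝ (n:ℤ)).eval x| ≤ (n : ℝ) + 1 := by
  have hsub : Icc (-1:ℝ) 1 ⊆ {x : ℝ | |(U ℝ (n:ℤ)).eval x| ≤ (n : ℝ) + 1} := by
    rw [← closure_Ioo (by norm_num : (-1:ℝ) ≠ 1)]
    apply closure_minimal
    · intro x hx
      have hθpos : 0 < Real.arccos x := Real.arccos_pos.2 hx.2
      have hθlt : Real.arccos x < π := by
        rcases lt_or_eq_of_le (Real.arccos_le_pi x) with h | h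
        · exact h
        · exfalso
          have : Real.cos (Real.arccos x) = -1 := by rw [h]; simp
          rw [Real.cos_arccos (le_of_lt hx.1) (le_of_lt hx.2)] at this
          linarith [hx.1]
      have hsin : 0 < Real.sin (Real.arccos x) := Real.sin_pos_of_pos_of_lt_pi hθpos hθlt
      have h1 := Real.cos_arccos (le_of_lt hx.1) (le_of_lt hx.2)
      have h2 := U_real_cos (Real.arccos x) (n : ℤ)
      rw [h1] at h2
      have h3 : |(U ℝ (n:ℤ)).eval x| * Real.sin (Real.arccos x)
          = |Real.sin (((n:ℝ) + 1) * Real.arccos x)| := by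
        rw [← abs_of_pos hsin, ← abs_mul, h2]; norm_num
      have h4 : |Real.sin (((n:ℝ) + 1) * Real.arccos x)| ≤ ((n:ℝ)+1) * Real.sin (Real.arccos x) := by
        have := my_abs_sin_nat_mul (n+1) (Real.arccos x)
        rw [abs_of_pos hsin] at this
        push_cast at this ⊢
        exact this
      have := h3 ▸ h4
      calc |(U ℝ (n:ℤ)).eval x| = |(U ℝ (n:ℤ)).eval x| * Real.sin (Real.arccos x) / Real.sin (Real.arccos x) := by
            field_simp
        _ ≤ ((n:ℝ)+1) * Real.sin (Real.arccos x) / Real.sin (Real.arccos x) := by gcongr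
        _ = (n:ℝ) + 1 := by field_simp
    · exact isClosed_le (continuous_abs.comp (Polynomial.continuous _)) continuous_const
  exact fun x hx => hsub hx

lemma my_abs_T_deriv_le (n : ℕ) {x : ℝ} (hx : x ∈ Icc (-1:ℝ) 1) :
    |(derivative (T ℝ (n:ℤ))).eval x| ≤ (n : ℝ) ^ 2 := by
  cases n with
  | zero => simp [T_zero]
  | succ m =>
    rw [T_derivative_eq_U]
    have : ((m + 1 : ℕ) : ℤ) - 1 = (m : ℤ) := by push_cast; ring
    rw [this]
    rw [eval_mul]
    have : ((((m+1:ℕ) : ℤ) : ℝ[X])).eval x = ((m:ℝ)+1) := by push_cast; simp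
    rw [this, abs_mul, abs_of_nonneg (by positivity : (0:ℝ) ≤ (m:ℝ)+1)]
    calc ((m:ℝ)+1) * |(U ℝ (m:ℤ)).eval x| ≤ ((m:ℝ)+1) * ((m:ℝ)+1) := by
          gcongr
          exact my_abs_U_le m x hx
      _ = ((m+1:ℕ):ℝ)^2 := by push_cast; ring

lemma my_natDegree_T_le : ∀ m : ℕ, (T ℝ (m:ℤ)).natDegree ≤ m := by
  intro m
  induction m using Nat.strong_induction_on with
  | _ m ih =>
    match m with
    | 0 => simp [T_zero]
    | 1 => simp [T_one]
    | (m+2) =>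
      have h : T ℝ ((m:ℤ)+2) = 2 * X * T ℝ ((m:ℤ)+1) - T ℝ (m:ℤ) := T_add_two ℝ m
      have hcast : ((m+2:ℕ):ℤ) = (m:ℤ)+2 := by push_cast; ring
      rw [hcast, h]
      apply le_trans (natDegree_sub_le _ _)
      apply max_le
      · calc (2 * X * T ℝ ((m:ℤ)+1)).natDegree
            ≤ (2 * X : ℝ[X]).natDegree + (T ℝ ((m:ℤ)+1)).natDegree := natDegree_mul_le
          _ ≤ 1 + (m+1) := by
              apply add_le_add
              · apply le_trans natDegree_mul_le
                simp
              · have := ih (m+1) (by omega)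
                push_cast at this ⊢
                exact this
          _ = m + 2 := by ring
      · exact le_trans (ih m (by omega)) (by omega)

/-- the alias index -/
def aliasIdx (N n : ℕ) : ℕ := if n % (2*N) ≤ N then n % (2*N) else 2*N - n % (2*N)

lemma aliasIdx_le (N n : ℕ) (hN : 1 ≤ N) : aliasIdx N n ≤ N := by
  unfold aliasIdx
  split
  · omega
  · have : n % (2*N) < 2*N := Nat.mod_lt _ (by omega)
    omega

lemma aliasIdx_eq_self (N n : ℕ) (hN : 1 ≤ N) (hn : n ≤ N) : aliasIdx N n = n := by
  unfold aliasIdx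
  have h : n % (2*N) = n := Nat.mod_eq_of_lt (by omega)
  rw [h]
  simp [hn]

lemma my_alias (N n k : ℕ) (hN : 1 ≤ N) (hk : k ≤ N) :
    (T ℝ (n:ℤ)).eval (-Real.cos (k * π / N)) = (T ℝ ((aliasIdx N n):ℤ)).eval (-Real.cos (k * π / N)) := by
  set th : ℝ := ((N - k : ℕ) : ℝ) * π / N with hth
  have hNne : (N:ℝ) ≠ 0 := by positivity
  have hx : -Real.cos (k * π / N) = Real.cos th := by
    rw [hth]
    have h1 : ((N - k : ℕ) : ℝ) = (N:ℝ) - k := by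
      rw [Nat.cast_sub hk]
    rw [h1]
    have h2 : ((N:ℝ) - k) * π / N = π - k * π / N := by field_simp
    rw [h2, Real.cos_pi_sub]
  rw [hx, T_real_cos, T_real_cos]
  set m : ℕ := N - k
  set j : ℕ := n % (2*N) with hj
  have hmod : 2*N*(n/(2*N)) + j = n := Nat.div_add_mod n (2*N)
  set q : ℕ := n / (2*N)
  by_cases hcase : j ≤ N
  · have hr : aliasIdx N n = j := by unfold aliasIdx; simp [← hj, hcase]
    rw [hr]
    have key : (n:ℝ) * th = (j:ℝ) * th + ((q*m : ℕ) : ℤ) * (2*π) := by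
      have hn' : (n:ℝ) = 2*N*q + j := by exact_mod_cast congrArg (Nat.cast : ℕ → ℝ) hmod |>.symm
      rw [hn', hth]
      push_cast
      field_simp
      ring
    push_cast
    rw [key, Real.cos_add_int_mul_two_pi]
  · have hr : aliasIdx N n = 2*N - j := by unfold aliasIdx; simp [← hj, hcase]
    rw [hr]
    have hjlt : j < 2*N := Nat.mod_lt _ (by omega)
    have key : (n:ℝ) * th = -(((2*N - j : ℕ):ℝ) * th) + (((q+1)*m : ℕ) : ℤ) * (2*π) := by
      have hn' : (n:ℝ) = 2*N*q + j := by exact_mod_cast congrArg (Nat.cast : ℕ → ℝ) hmod |>.symm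
      have h2 : ((2*N - j : ℕ):ℝ) = 2*(N:ℝ) - j := by
        rw [Nat.cast_sub (le_of_lt hjlt)]; push_cast; ring
      rw [hn', hth, h2]
      push_cast
      field_simp
      ring
    push_cast
    rw [key, Real.cos_add_int_mul_two_pi, Real.cos_neg]

lemma my_nodes_inj (N : ℕ) (hN : 1 ≤ N) :
    Function.Injective (fun i : Fin (N+1) => -Real.cos ((i:ℕ) * π / N)) := by
  intro i j hij
  simp only [neg_inj] at hij
  have hmem : ∀ i : Fin (N+1), ((i:ℕ) : ℝ) * π / N ∈ Icc 0 π := by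
    intro i
    constructor
    · positivity
    · rw [div_le_iff₀ (by positivity : (0:ℝ) < N)]
      have : ((i:ℕ):ℝ) ≤ N := by exact_mod_cast Nat.le_of_lt_succ i.2
      nlinarith [Real.pi_pos]
  have := Real.injOn_cos (hmem i) (hmem j) hij
  have hNpos : (0:ℝ) < N := by positivity
  have : ((i:ℕ):ℝ) = ((j:ℕ):ℝ) := by
    rw [div_left_inj' hNpos.ne', mul_left_inj' Real.pi_pos.ne'] at this
    exact this
  have : (i:ℕ) = (j:ℕ) := by exact_mod_cast this
  exact Fin.ext this

lemma my_tsum_hasDerivWithinAt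
    (g g' : ℕ → ℝ → ℝ) (u : ℕ → ℝ) (s : Set ℝ) (hs : Convex ℝ s)
    (hu : Summable u)
    (hder : ∀ n, ∀ y ∈ s, HasDerivWithinAt (g n) (g' n y) s y)
    (hb : ∀ n, ∀ y ∈ s, |g' n y| ≤ u n)
    (hgs : ∀ y ∈ s, Summable (fun n => g n y))
    {x : ℝ} (hx : x ∈ s) :
    HasDerivWithinAt (fun y => ∑' n, g n y) (∑' n, g' n x) s x := by
  have hu0 : ∀ n, 0 ≤ u n := fun n => le_trans (abs_nonneg _) (hb n x hx)
  have hg'sum : ∀ y ∈ s, Summable (fun n => g' n y) := fun y hy =>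
    Summable.of_norm_bounded hu (fun n => hb n y hy)
  -- Lipschitz estimate for tails
  have hlip : ∀ K : ℕ, ∀ y ∈ s, ∀ z ∈ s,
      |(∑' n, g (n + K) y) - (∑' n, g (n + K) z)| ≤ (∑' n, u (n + K)) * |y - z| := by
    intro K y hy z hz
    have hsy : Summable fun n => g (n + K) y := (summable_nat_add_iff K).2 (hgs y hy)
    have hsz : Summable fun n => g (n + K) z := (summable_nat_add_iff K).2 (hgs z hz)
    rw [← Summable.tsum_sub hsy hsz]
    have hterm : ∀ n : ℕ, |g (n + K) y - g (n + K) z| ≤ u (n + K) * |y - z| := by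
      intro n
      exact hs.norm_image_sub_le_of_norm_hasDerivWithin_le
        (fun w hw => hder (n + K) w hw) (fun w hw => hb (n + K) w hw) hz hy
    calc |∑' n, (g (n + K) y - g (n + K) z)| ≤ ∑' n, |g (n + K) y - g (n + K) z| := by
          simp only [← Real.norm_eq_abs]
          apply norm_tsum_le_tsum_norm
          simp only [Real.norm_eq_abs]
          apply Summable.of_nonneg_of_le (fun n => abs_nonneg _) hterm
          exact Summable.mul_right _ ((summable_nat_add_iff K).2 hu)
      _ ≤ ∑' n, u (n + K) * |y - z| := by
          apply Summable.tsum_le_tsum hterm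
          · apply Summable.of_nonneg_of_le (fun n => abs_nonneg _) hterm
            exact Summable.mul_right _ ((summable_nat_add_iff K).2 hu)
          · exact Summable.mul_right _ ((summable_nat_add_iff K).2 hu)
      _ = (∑' n, u (n + K)) * |y - z| := tsum_mul_right
  rw [hasDerivWithinAt_iff_isLittleO, isLittleO_iff]
  intro c hc
  -- choose K with small tail
  have htail : Tendsto (fun K => ∑' n, u (n + K)) atTop (nhds 0) := by
    have := tendsto_sum_nat_add u
    exact this
  obtain ⟨K, hK⟩ : ∃ K, ∑' n, u (n + K) < c / 3 := by
    have := htail.eventually (eventually_lt_nhds (by linarith : (0:ℝ) < c/3))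
    rcases this.exists with ⟨K, hK⟩
    exact ⟨K, hK⟩
  set ε : ℝ := ∑' n, u (n + K) with hε
  have hε0 : 0 ≤ ε := tsum_nonneg (fun n => hu0 _)
  -- finite part
  have hP : HasDerivWithinAt (fun y => ∑ n ∈ Finset.range K, g n y)
      (∑ n ∈ Finset.range K, g' n x) s x :=
    HasDerivWithinAt.fun_sum (fun n _ => hder n x hx)
  -- tail derivative bound at x
  have htd : |∑' n, g' (n + K) x| ≤ ε := by
    have hsx : Summable fun n => g' (n + K) x := (summable_nat_add_iff K).2 (hg'sum x hx)
    calc |∑' n, g' (n + K) x| ≤ ∑' n, |g' (n + K) x| := by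
          simp only [← Real.norm_eq_abs]
          apply norm_tsum_le_tsum_norm
          simp only [Real.norm_eq_abs]
          apply Summable.of_nonneg_of_le (fun n => abs_nonneg _) (fun n => hb (n+K) x hx)
          exact (summable_nat_add_iff K).2 hu
      _ ≤ ∑' n, u (n + K) := by
          apply Summable.tsum_le_tsum (fun n => hb (n+K) x hx)
          · apply Summable.of_nonneg_of_le (fun n => abs_nonneg _) (fun n => hb (n+K) x hx)
            exact (summable_nat_add_iff K).2 hu
          · exact (summable_nat_add_iff K).2 hu
  -- splitting of the derivative
  have hdsplit : (∑' n, g' n x) = (∑ n ∈ Finset.range K, g' n x) + ∑' n, g' (n + K) x :=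
    (Summable.sum_add_tsum_nat_add K (hg'sum x hx)).symm
  -- eventually from the finite part
  have hPo := (hasDerivWithinAt_iff_isLittleO.1 hP)
  rw [isLittleO_iff] at hPo
  have hPev := hPo (by linarith : (0:ℝ) < c/3)
  filter_upwards [hPev, self_mem_nhdsWithin] with y hy hys
  -- split the sums at y and x
  have hsplity : (∑' n, g n y) = (∑ n ∈ Finset.range K, g n y) + ∑' n, g (n + K) y :=
    (Summable.sum_add_tsum_nat_add K (hgs y hys)).symm
  have hsplitx : (∑' n, g n x) = (∑ n ∈ Finset.range K, g n x) + ∑' n, g (n + K) x :=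
    (Summable.sum_add_tsum_nat_add K (hgs x hx)).symm
  have hlipyx := hlip K y hys x hx
  set A : ℝ := (∑ n ∈ Finset.range K, g n y) - (∑ n ∈ Finset.range K, g n x)
      - (y - x) * (∑ n ∈ Finset.range K, g' n x) with hA
  set B : ℝ := (∑' n, g (n + K) y) - (∑' n, g (n + K) x) with hB
  set D : ℝ := (y - x) * (∑' n, g' (n + K) x) with hD
  have key : (∑' n, g n y) - (∑' n, g n x) - (y - x) • (∑' n, g' n x) = A + B - D := by
    rw [hA, hB, hD, hsplity, hsplitx, hdsplit]
    simp only [smul_eq_mul]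
    ring
  rw [key]
  have h1 : |A| ≤ c/3 * |y - x| := by
    have := hy
    simp only [smul_eq_mul, Real.norm_eq_abs] at this
    exact this
  have h2 : |B| ≤ ε * |y - x| := hlipyx
  have h3 : |D| ≤ ε * |y - x| := by
    rw [hD, abs_mul, mul_comm]
    exact mul_le_mul_of_nonneg_right htd (abs_nonneg _)
  have h4 : ‖A + B - D‖ ≤ |A| + |B| + |D| :=
    le_trans (norm_sub_le _ _) (by simp only [Real.norm_eq_abs]; gcongr; exact abs_add_le _ _)
  simp only [Real.norm_eq_abs] at h4 ⊢
  calc |A + B - D| ≤ |A| + |B| + |D| := h4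
    _ ≤ c/3 * |y - x| + ε * |y - x| + ε * |y - x| := by gcongr
    _ ≤ c * |y - x| := by nlinarith [abs_nonneg (y - x)]

end helpers


/-- Derivative of the Chebyshev interpolant: if `f(x) = a₀/2 + Σ_{n=1}^∞ aₙ Tₙ(x)` with
`Σ n² |aₙ| < ∞`, and `C` is the (unique) polynomial of degree at most `N` agreeing with `f`
at the Gauss–Lobatto nodes `xₖ = -cos(kπ/N)`, `k = 0, …, N`, then
`sup_{x ∈ [-1,1]} |f'(x) - C'(x)| ≤ 2 Σ_{n=N}^∞ n² |aₙ|`, where `f'` denotes the derivative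
of `f` within `[-1,1]`. -/
theorem chebyshev_interpolation_derivative_error
    (a : ℕ → ℝ) (ha : Summable fun n : ℕ => (n : ℝ) ^ 2 * |a n|)
    (f : ℝ → ℝ)
    (hf : ∀ x ∈ Set.Icc (-1 : ℝ) 1,
      HasSum (fun n : ℕ => a (n + 1) * (Chebyshev.T ℝ (n + 1)).eval x) (f x - a 0 / 2))
    (N : ℕ) (hN : 1 ≤ N)
    (C : Polynomial ℝ) (hdeg : C.natDegree ≤ N)
    (hC : ∀ k : ℕ, k ≤ N →
      C.eval (-Real.cos (k * Real.pi / N)) = f (-Real.cos (k * Real.pi / N))) :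
    ∀ x ∈ Set.Icc (-1 : ℝ) 1,
      |derivWithin f (Set.Icc (-1 : ℝ) 1) x - (Polynomial.derivative C).eval x|
        ≤ 2 * ∑' n : ℕ, ((N + n : ℕ) : ℝ) ^ 2 * |a (N + n)| := by
  intro x hx
  have hN0 : (0:ℝ) < N := by exact_mod_cast hN
  -- summability basics
  have haS : Summable (fun n : ℕ => |a (n+1)|) := by
    apply Summable.of_nonneg_of_le (fun n => abs_nonneg _) _ ((summable_nat_add_iff 1).2 ha)
    intro n
    have h1 : (1:ℝ) ≤ ((n+1:ℕ):ℝ)^2 := by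
      have : (1:ℝ) ≤ ((n+1:ℕ):ℝ) := by exact_mod_cast Nat.one_le_iff_ne_zero.2 (Nat.succ_ne_zero n)
      nlinarith
    nlinarith [h1, abs_nonneg (a (n+1))]
  have ha2 : Summable (fun n : ℕ => 2*(((n:ℝ)+1)^2 * |a (n+1)|)) := by
    apply Summable.mul_left
    have := (summable_nat_add_iff 1).2 ha
    convert this using 2 with n
    · rfl
    push_cast
    ring
  -- nodes
  have hnode_mem : ∀ k : ℕ, -Real.cos (k * π / N) ∈ Icc (-1:ℝ) 1 := by
    intro k
    constructor
    · have := Real.cos_le_one (k * π / N)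
      linarith
    · have := Real.neg_one_le_cos (k * π / N)
      linarith
  -- the aliased polynomial
  set b : ℕ → ℝ := fun m => ∑' n : ℕ, (if aliasIdx N (n+1) = m then a (n+1) else 0) with hbdef
  have hbsum : ∀ m, Summable (fun n : ℕ => if aliasIdx N (n+1) = m then a (n+1) else 0) := by
    intro m
    apply Summable.of_norm_bounded haS
    intro n
    simp only [Real.norm_eq_abs]
    split
    · exact le_refl _
    · simp [abs_nonneg]
  set Q : ℝ[X] := Polynomial.C (a 0 / 2)
      + ∑ m ∈ Finset.range (N+1), Polynomial.C (b m) * T ℝ (m:ℤ) with hQdef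
  have hQeval : ∀ y : ℝ,
      Q.eval y = a 0 / 2 + ∑' n : ℕ, a (n+1) * (T ℝ ((aliasIdx N (n+1)):ℤ)).eval y := by
    intro y
    rw [hQdef]
    simp only [eval_add, eval_C, eval_finset_sum, eval_mul]
    congr 1
    have step1 : ∀ m ∈ Finset.range (N+1),
        b m * (T ℝ (m:ℤ)).eval y
          = ∑' n : ℕ, (if aliasIdx N (n+1) = m then a (n+1) else 0) * (T ℝ (m:ℤ)).eval y := by
      intro m _
      rw [hbdef]
      exact (tsum_mul_right).symm
    rw [Finset.sum_congr rfl step1]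
    rw [← Summable.tsum_finsetSum (fun m _ => (hbsum m).mul_right _)]
    apply tsum_congr
    intro n
    have hmem : aliasIdx N (n+1) ∈ Finset.range (N+1) :=
      Finset.mem_range.2 (Nat.lt_succ_of_le (aliasIdx_le N (n+1) hN))
    rw [Finset.sum_eq_single (aliasIdx N (n+1))]
    · simp
    · intro m _ hm
      rw [if_neg (fun h => hm h.symm), zero_mul]
    · intro h
      exact absurd hmem h
  have hdegQ : Q.natDegree ≤ N := by
    rw [hQdef]
    apply le_trans (natDegree_add_le _ _)
    apply max_le
    · simp
    · apply natDegree_sum_le_of_forall_le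
      intro m hm
      apply le_trans (natDegree_C_mul_le _ _)
      exact le_trans (my_natDegree_T_le m) (Nat.le_of_lt_succ (Finset.mem_range.1 hm))
  -- Q agrees with f at the nodes, hence C = Q
  have hQC : C = Q := by
    have hsub : C - Q = 0 := by
      apply Polynomial.eq_zero_of_natDegree_lt_card_of_eval_eq_zero (C - Q) (my_nodes_inj N hN)
      · intro i
        have hiN : (i:ℕ) ≤ N := Nat.le_of_lt_succ i.2
        rw [eval_sub, hC i hiN, sub_eq_zero]
        have hfs := hf (-Real.cos (i * π / N)) (hnode_mem i)
        rw [hQeval]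
        have hcong : ∀ n : ℕ,
            a (n+1) * (T ℝ ((aliasIdx N (n+1)):ℤ)).eval (-Real.cos (i * π / N))
              = a (n+1) * (T ℝ ((n+1:ℕ):ℤ)).eval (-Real.cos (i * π / N)) := by
          intro n
          rw [← my_alias N (n+1) i hN hiN]
        rw [tsum_congr hcong]
        have := hfs.tsum_eq
        push_cast at this ⊢
        rw [this]
        ring
      · rw [Fintype.card_fin]
        exact lt_of_le_of_lt (le_trans (natDegree_sub_le _ _) (max_le hdeg hdegQ))
          (Nat.lt_succ_self N)
    exact sub_eq_zero.1 hsub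
  -- the residual series
  set g : ℕ → ℝ → ℝ := fun n y =>
    a (n+1) * ((T ℝ ((n+1:ℕ):ℤ)).eval y - (T ℝ ((aliasIdx N (n+1)):ℤ)).eval y) with hgdef
  set g' : ℕ → ℝ → ℝ := fun n y =>
    a (n+1) * ((derivative (T ℝ ((n+1:ℕ):ℤ))).eval y
      - (derivative (T ℝ ((aliasIdx N (n+1)):ℤ))).eval y) with hg'def
  set u : ℕ → ℝ := fun n => if n + 1 ≤ N then 0 else 2*(((n:ℝ)+1)^2 * |a (n+1)|) with hudef
  have hbnd : ∀ n, ∀ y ∈ Icc (-1:ℝ) 1, |g' n y| ≤ u n := by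
    intro n y hy
    rw [hg'def, hudef]
    by_cases hn : n + 1 ≤ N
    · simp only [if_pos hn]
      rw [aliasIdx_eq_self N (n+1) hN hn]
      simp
    · simp only [if_neg hn]
      push_neg at hn
      have h1 := my_abs_T_deriv_le (n+1) hy
      have h2 := my_abs_T_deriv_le (aliasIdx N (n+1)) hy
      have h3 : ((aliasIdx N (n+1) : ℕ) : ℝ)^2 ≤ ((n+1:ℕ):ℝ)^2 := by
        have : aliasIdx N (n+1) ≤ n+1 := le_trans (aliasIdx_le N (n+1) hN) (by omega)
        have hcast : ((aliasIdx N (n+1) : ℕ) : ℝ) ≤ ((n+1:ℕ):ℝ) := by exact_mod_cast this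
        have hpos : (0:ℝ) ≤ ((aliasIdx N (n+1) : ℕ) : ℝ) := Nat.cast_nonneg _
        nlinarith
      calc |a (n+1) * ((derivative (T ℝ ((n+1:ℕ):ℤ))).eval y
              - (derivative (T ℝ ((aliasIdx N (n+1)):ℤ))).eval y)|
          ≤ |a (n+1)| * (|(derivative (T ℝ ((n+1:ℕ):ℤ))).eval y|
              + |(derivative (T ℝ ((aliasIdx N (n+1)):ℤ))).eval y|) := by
            rw [abs_mul]
            gcongr
            exact abs_sub _ _
        _ ≤ |a (n+1)| * (((n+1:ℕ):ℝ)^2 + ((n+1:ℕ):ℝ)^2) := by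
            gcongr
            exact le_trans h2 h3
        _ = 2*(((n:ℝ)+1)^2 * |a (n+1)|) := by push_cast; ring
  have hu0 : ∀ n, 0 ≤ u n := by
    intro n
    simp only [hudef]
    split
    · exact le_refl _
    · positivity
  have husum : Summable u := by
    apply Summable.of_nonneg_of_le hu0 _ ha2
    intro n
    simp only [hudef]
    split
    · positivity
    · exact le_refl _
  have hder : ∀ n, ∀ y ∈ Icc (-1:ℝ) 1, HasDerivWithinAt (g n) (g' n y) (Icc (-1:ℝ) 1) y := by
    intro n y _
    rw [hgdef, hg'def]
    exact ((((T ℝ ((n+1:ℕ):ℤ)).hasDerivAt y).sub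
      ((T ℝ ((aliasIdx N (n+1)):ℤ)).hasDerivAt y)).const_mul _).hasDerivWithinAt
  have hgs : ∀ y ∈ Icc (-1:ℝ) 1, Summable (fun n => g n y) := by
    intro y hy
    apply Summable.of_norm_bounded (g := fun n => 2 * |a (n+1)|) (haS.mul_left 2)
    intro n
    rw [hgdef]
    simp only [Real.norm_eq_abs, abs_mul]
    calc |a (n+1)| * |(T ℝ ((n+1:ℕ):ℤ)).eval y - (T ℝ ((aliasIdx N (n+1)):ℤ)).eval y|
        ≤ |a (n+1)| * (|(T ℝ ((n+1:ℕ):ℤ)).eval y| + |(T ℝ ((aliasIdx N (n+1)):ℤ)).eval y|) := by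
          gcongr
          exact abs_sub _ _
      _ ≤ |a (n+1)| * (1 + 1) := by
          gcongr
          · exact my_abs_T_le _ hy
          · exact my_abs_T_le _ hy
      _ = 2 * |a (n+1)| := by ring
  have hmain := my_tsum_hasDerivWithinAt g g' u (Icc (-1:ℝ) 1) (convex_Icc _ _)
    husum hder hbnd hgs hx
  -- identify the series sum with f - Q on Icc
  have hTr_sum : ∀ y ∈ Icc (-1:ℝ) 1,
      Summable (fun n : ℕ => a (n+1) * (T ℝ ((aliasIdx N (n+1)):ℤ)).eval y) := by
    intro y hy
    apply Summable.of_norm_bounded haS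
    intro n
    simp only [Real.norm_eq_abs, abs_mul]
    calc |a (n+1)| * |(T ℝ ((aliasIdx N (n+1)):ℤ)).eval y| ≤ |a (n+1)| * 1 := by
          gcongr
          exact my_abs_T_le _ hy
      _ = |a (n+1)| := mul_one _
  have hGeq : ∀ y ∈ Icc (-1:ℝ) 1, (∑' n, g n y) = f y - Q.eval y := by
    intro y hy
    have h1 := hf y hy
    have h2 : HasSum (fun n : ℕ => a (n+1) * (T ℝ ((aliasIdx N (n+1)):ℤ)).eval y)
        (Q.eval y - a 0 / 2) := by
      rw [(hTr_sum y hy).hasSum_iff]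
      rw [hQeval y]
      ring
    have h1' : HasSum (fun n : ℕ => a (n+1) * (T ℝ ((n+1:ℕ):ℤ)).eval y) (f y - a 0 / 2) := by
      have hfun : (fun n : ℕ => a (n+1) * (T ℝ ((n+1:ℕ):ℤ)).eval y)
          = (fun n : ℕ => a (n + 1) * (T ℝ ((n:ℤ) + 1)).eval y) := by
        funext n
        push_cast
        rfl
      rw [hfun]
      exact h1
    have h3 := h1'.sub h2
    rw [hgdef]
    have h4 : (f y - a 0 / 2) - (Q.eval y - a 0 / 2) = f y - Q.eval y := by ring
    rw [← h4]
    apply HasSum.tsum_eq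
    convert h3 using 2 with n
    · rfl
    ring
  have hfd : HasDerivWithinAt f ((∑' n, g' n x) + (derivative Q).eval x) (Icc (-1:ℝ) 1) x := by
    have hsum' := hmain.add ((Q.hasDerivAt x).hasDerivWithinAt)
    apply hsum'.congr
    · intro y hy
      simp only [Pi.add_apply]
      rw [hGeq y hy]
      ring
    · simp only [Pi.add_apply]
      rw [hGeq x hx]
      ring
  have hDW : derivWithin f (Icc (-1:ℝ) 1) x = (∑' n, g' n x) + (derivative Q).eval x :=
    hfd.derivWithin ((uniqueDiffOn_Icc (by norm_num)) x hx)
  rw [hDW, hQC]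
  have hcancel : ((∑' n, g' n x) + (derivative Q).eval x) - (derivative Q).eval x
      = ∑' n, g' n x := by ring
  rw [hcancel]
  -- bound the tail
  have hg'x_sum : Summable (fun n => |g' n x|) :=
    Summable.of_nonneg_of_le (fun n => abs_nonneg _) (fun n => hbnd n x hx) husum
  have hnormsum : |∑' n, g' n x| ≤ ∑' n, u n := by
    calc |∑' n, g' n x| ≤ ∑' n, |g' n x| := by
          simp only [← Real.norm_eq_abs]
          apply norm_tsum_le_tsum_norm
          simp only [Real.norm_eq_abs]
          exact hg'x_sum
      _ ≤ ∑' n, u n := Summable.tsum_le_tsum (fun n => hbnd n x hx) hg'x_sum husum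
  -- tail rewriting
  set v : ℕ → ℝ := fun n => ((N + n : ℕ) : ℝ) ^ 2 * |a (N + n)| with hvdef
  have hvsum : Summable v := by
    have := (summable_nat_add_iff N).2 ha
    apply Summable.of_nonneg_of_le (fun n => by positivity) _ this
    intro n
    rw [hvdef]
    simp only
    rw [Nat.add_comm N n]
  have hv0 : ∀ n, 0 ≤ v n := fun n => by rw [hvdef]; positivity
  have hfinal : ∑' n, u n ≤ 2 * ∑' n, v n := by
    have hsplit : ∑ i ∈ Finset.range N, u i + ∑' i, u (i + N) = ∑' i, u i :=
      Summable.sum_add_tsum_nat_add N husum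
    have hzero : ∑ i ∈ Finset.range N, u i = 0 := by
      apply Finset.sum_eq_zero
      intro i hi
      have hi' : i < N := Finset.mem_range.1 hi
      simp only [hudef]
      rw [if_pos (by omega)]
    have heq : ∀ i : ℕ, u (i + N) = 2 * v (i+1) := by
      intro i
      simp only [hudef, hvdef]
      rw [if_neg (by omega)]
      have hidx : N + (i + 1) = i + N + 1 := by omega
      rw [hidx]
      push_cast
      ring
    have hv1sum : Summable (fun i => v (i+1)) := (summable_nat_add_iff 1).2 hvsum
    calc ∑' n, u n = ∑' i, u (i + N) := by rw [← hsplit, hzero, zero_add]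
      _ = ∑' i, 2 * v (i+1) := tsum_congr heq
      _ = 2 * ∑' i, v (i+1) := tsum_mul_left
      _ ≤ 2 * (v 0 + ∑' i, v (i+1)) := by linarith [hv0 0]
      _ = 2 * ∑' n, v n := by rw [← Summable.tsum_eq_zero_add hvsum]
  exact le_trans hnormsum hfinal
end
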